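/- Let p : [0,∞) → [0,∞) be continuous and integrable, and define I(t) = ∫_0^t exp(∫_τ^t p(s) ds)·(c − Ī·p(τ)) dτ. For any h > 0 and any natural number k, set p̂_k = 1 − exp(−∫_{kh}^{(k+1)h} p(s) ds) and Î_k = I(kh). Then (Ī − Î_k)·p̂_k + (Î_{k+1} − Î_k)·(1 − p̂_k) ≤ c·h. -/

import Mathlib

open MeasureTheory

/-- Discretization step: sampling a continuous-time feasible strategy with
intensity `p` and accumulated information
`I(t) = ∫_0^t exp(∫_τ^t p(s) ds)·(c − Ī·p(τ)) dτ` on a grid of mesh `h > 0`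
yields sequences `p̂_k = 1 − exp(−∫_{kh}^{(k+1)h} p)`, `Î_k = I(kh)` satisfying
the discrete capacity constraint with capacity `c·h`. -/
theorem discretization_feasible
    (c Ibar : ℝ) (hc : 0 < c) (hcI : c < Ibar)
    (p : ℝ → ℝ) (hpc : ContinuousOn p (Set.Ici 0))
    (hpint : IntegrableOn p (Set.Ici 0))
    (hp0 : ∀ s, 0 ≤ s → 0 ≤ p s)
    (I : ℝ → ℝ)
    (hI : ∀ t : ℝ, I t = ∫ τ in (0:ℝ)..t, Real.exp (∫ s in τ..t, p s) * (c - Ibar * p τ))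
    (h : ℝ) (hh : 0 < h) (k : ℕ) :
    (Ibar - I ((k : ℝ) * h)) *
        (1 - Real.exp (-(∫ s in ((k : ℝ) * h)..(((k : ℝ) + 1) * h), p s))) +
      (I (((k : ℝ) + 1) * h) - I ((k : ℝ) * h)) *
        (1 - (1 - Real.exp (-(∫ s in ((k : ℝ) * h)..(((k : ℝ) + 1) * h), p s)))) ≤
    c * h := by
  set a : ℝ := (k : ℝ) * h with ha_def
  set b : ℝ := ((k : ℝ) + 1) * h with hb_def
  have ha : 0 ≤ a := mul_nonneg (Nat.cast_nonneg k) hh.le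
  have hab : a ≤ b := by
    have : (k : ℝ) ≤ (k : ℝ) + 1 := by linarith
    exact mul_le_mul_of_nonneg_right this hh.le
  have hb : 0 ≤ b := le_trans ha hab
  have hba : b - a = h := by ring
  -- interval integrability of p on subintervals of [0,∞)
  have hpii : ∀ u v : ℝ, 0 ≤ u → 0 ≤ v → IntervalIntegrable p volume u v := by
    intro u v hu hv
    rw [intervalIntegrable_iff]
    refine hpint.mono_set ?_
    intro x hx
    have := hx.1
    have : min u v < x := this
    exact le_of_lt (lt_of_le_of_lt (le_min hu hv) this)
  -- primitive H
  set H : ℝ → ℝ := fun x => ∫ s in (0:ℝ)..x, p s with hH_def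
  have hHsplit : ∀ τ t : ℝ, 0 ≤ τ → 0 ≤ t → (∫ s in τ..t, p s) = H t - H τ := by
    intro τ t hτ ht
    have := intervalIntegral.integral_add_adjacent_intervals
      (hpii 0 τ le_rfl hτ) (hpii τ t hτ ht)
    simp only [hH_def]
    linarith
  -- continuity of H on [0, b]
  have hHcont : ContinuousOn H (Set.Icc 0 b) := by
    have : ContinuousOn H (Set.uIcc 0 b) := by
      apply intervalIntegral.continuousOn_primitive_interval
      refine hpint.mono_set ?_
      rw [Set.uIcc_of_le hb]
      exact fun x hx => hx.1
    rwa [Set.uIcc_of_le hb] at this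
  -- H is nonneg and monotone on [0,∞)
  have hHmono : ∀ u v : ℝ, 0 ≤ u → u ≤ v → H u ≤ H v := by
    intro u v hu huv
    have : (0:ℝ) ≤ ∫ s in u..v, p s := by
      apply intervalIntegral.integral_nonneg huv
      intro x hx
      exact hp0 x (le_trans hu hx.1)
    have h2 := hHsplit u v hu (le_trans hu huv)
    linarith
  -- derivative of H at τ > 0
  have hHderiv : ∀ τ : ℝ, 0 < τ → HasDerivAt H (p τ) τ := by
    intro τ hτ
    apply intervalIntegral.integral_hasDerivAt_right (hpii 0 τ le_rfl hτ.le)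
    · exact (hpc.mono (fun x (hx : x ∈ Set.Ioi (0:ℝ)) => Set.mem_Ici.mpr (le_of_lt (Set.mem_Ioi.mp hx)))).stronglyMeasurableAtFilter
        isOpen_Ioi τ hτ
    · exact (hpc τ hτ.le).continuousAt (Ici_mem_nhds hτ)
  -- rewrite I values
  have hIa : I a = ∫ τ in (0:ℝ)..a, Real.exp (H a - H τ) * (c - Ibar * p τ) := by
    rw [hI a]
    apply intervalIntegral.integral_congr
    intro τ hτ
    rw [Set.uIcc_of_le ha] at hτ
    beta_reduce
    rw [hHsplit τ a hτ.1 ha]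
  have gcont : ∀ t : ℝ, ContinuousOn (fun τ => Real.exp (H t - H τ) * (c - Ibar * p τ))
      (Set.Icc 0 b) := by
    intro t
    apply ContinuousOn.mul
    · exact (Real.continuous_exp.comp_continuousOn (continuousOn_const.sub hHcont))
    · exact continuousOn_const.sub (continuousOn_const.mul
        (hpc.mono (fun x hx => hx.1)))
  have gii : ∀ t u v : ℝ, 0 ≤ u → v ≤ b → u ≤ v →
      IntervalIntegrable (fun τ => Real.exp (H t - H τ) * (c - Ibar * p τ)) volume u v := by
    intro t u v hu hv huv
    apply ContinuousOn.intervalIntegrable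
    apply (gcont t).mono
    rw [Set.uIcc_of_le huv]
    exact Set.Icc_subset_Icc hu hv
  have hIb : I b = Real.exp (H b - H a) * I a
      + ∫ τ in a..b, Real.exp (H b - H τ) * (c - Ibar * p τ) := by
    rw [hI b]
    have h1 : (∫ τ in (0:ℝ)..b, Real.exp (∫ s in τ..b, p s) * (c - Ibar * p τ))
        = ∫ τ in (0:ℝ)..b, Real.exp (H b - H τ) * (c - Ibar * p τ) := by
      apply intervalIntegral.integral_congr
      intro τ hτ
      rw [Set.uIcc_of_le hb] at hτ
      beta_reduce
      rw [hHsplit τ b hτ.1 hb]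
    rw [h1]
    rw [← intervalIntegral.integral_add_adjacent_intervals (gii b 0 a le_rfl hab ha) (gii b a b ha le_rfl hab)]
    congr 1
    have h2 : (∫ τ in (0:ℝ)..a, Real.exp (H b - H τ) * (c - Ibar * p τ))
          = ∫ τ in (0:ℝ)..a, Real.exp (H b - H a) * (Real.exp (H a - H τ) * (c - Ibar * p τ)) := by
        apply intervalIntegral.integral_congr
        intro τ hτ
        beta_reduce
        have he : H b - H τ = (H b - H a) + (H a - H τ) := by ring
        rw [he, Real.exp_add, mul_assoc]
    rw [h2, intervalIntegral.integral_const_mul, hIa]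
  -- notation
  have hPab : (∫ s in a..b, p s) = H b - H a := hHsplit a b ha hb
  have hIccsub : Set.Icc a b ⊆ Set.Icc 0 b := Set.Icc_subset_Icc ha le_rfl
  have hexpcont : ContinuousOn (fun τ => Real.exp (H a - H τ)) (Set.Icc a b) :=
    Real.continuous_exp.comp_continuousOn (continuousOn_const.sub (hHcont.mono hIccsub))
  have int1 : IntervalIntegrable (fun τ => Real.exp (H a - H τ)) volume a b := by
    apply ContinuousOn.intervalIntegrable
    rwa [Set.uIcc_of_le hab]
  have int2 : IntervalIntegrable (fun τ => p τ * Real.exp (H a - H τ)) volume a b := by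
    apply ContinuousOn.intervalIntegrable
    rw [Set.uIcc_of_le hab]
    exact (hpc.mono (fun x hx => le_trans ha hx.1)).mul hexpcont
  -- FTC
  have hFTC : (∫ τ in a..b, p τ * Real.exp (H a - H τ)) = 1 - Real.exp (H a - H b) := by
    have hder : ∀ x ∈ Set.Ioo a b, HasDerivAt (fun τ => -Real.exp (H a - H τ))
        (p x * Real.exp (H a - H x)) x := by
      intro x hx
      have hx0 : 0 < x := lt_of_le_of_lt ha hx.1
      have h1 : HasDerivAt (fun τ => H a - H τ) (-p x) x := (hHderiv x hx0).const_sub (H a)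
      have h2 := h1.exp
      have h3 : HasDerivAt (fun τ => -Real.exp (H a - H τ)) (-(Real.exp (H a - H x) * -p x)) x := h2.neg
      convert h3 using 1
      ring
    have hcont2 : ContinuousOn (fun τ => -Real.exp (H a - H τ)) (Set.Icc a b) := hexpcont.neg
    have := intervalIntegral.integral_eq_sub_of_hasDerivAt_of_le hab hcont2 hder int2
    rw [this]
    simp only [sub_self, Real.exp_zero]
    ring
  -- E relations
  have hDE : Real.exp (H b - H a) * Real.exp (H a - H b) = 1 := by
    rw [← Real.exp_add]
    norm_num
  have hEX : Real.exp (H a - H b) * (∫ τ in a..b, Real.exp (H b - H τ) * (c - Ibar * p τ))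
      = ∫ τ in a..b, Real.exp (H a - H τ) * (c - Ibar * p τ) := by
    rw [← intervalIntegral.integral_const_mul]
    apply intervalIntegral.integral_congr
    intro τ hτ
    beta_reduce
    have he : H a - H b + (H b - H τ) = H a - H τ := by ring
    rw [← mul_assoc, ← Real.exp_add, he]
  -- the key decomposition of Y
  have hY : (∫ τ in a..b, Real.exp (H a - H τ) * (c - Ibar * p τ))
      = c * (∫ τ in a..b, Real.exp (H a - H τ)) - Ibar * (1 - Real.exp (H a - H b)) := by
    have h1 : (∫ τ in a..b, Real.exp (H a - H τ) * (c - Ibar * p τ))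
        = ∫ τ in a..b, (c * Real.exp (H a - H τ) - Ibar * (p τ * Real.exp (H a - H τ))) := by
      apply intervalIntegral.integral_congr
      intro τ hτ
      beta_reduce
      ring
    rw [h1, intervalIntegral.integral_sub (int1.const_mul c) (int2.const_mul Ibar),
      intervalIntegral.integral_const_mul, intervalIntegral.integral_const_mul, hFTC]
  -- the key identity
  have key : (Ibar - I a) * (1 - Real.exp (H a - H b))
      + (I b - I a) * (1 - (1 - Real.exp (H a - H b)))
      = c * (∫ τ in a..b, Real.exp (H a - H τ)) := by
    rw [hIb]
    linear_combination (I a) * hDE + hEX + hY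
  -- bound the remaining integral
  have hJ : (∫ τ in a..b, Real.exp (H a - H τ)) ≤ b - a := by
    have h1 : (∫ τ in a..b, (1:ℝ)) = b - a := by simp
    rw [← h1]
    apply intervalIntegral.integral_mono_on hab int1 intervalIntegrable_const
    intro x hx
    rw [Real.exp_le_one_iff]
    have := hHmono a x ha hx.1
    linarith
  rw [hPab, neg_sub, key]
  have h2 := mul_le_mul_of_nonneg_left hJ hc.le
  have h3 : c * (b - a) = c * h := by rw [hba]
  linarith
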